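/- Let T be a stress-energy tensor on (N+1)-dimensional Minkowski space satisfying the weakened stable dominant energy condition, and suppose T ≠ 0. Then for every future-directed lightlike vector n, one has T(n,n) > 0 (in particular T(n,n) ≠ 0). -/
import Mathlib


open Matrix

/-- The Minkowski metric `diag(-1,1,…,1)` on `ℝ^{N+1}`. -/
noncomputable def eta (N : ℕ) : Matrix (Fin (N+1)) (Fin (N+1)) ℝ :=
  Matrix.diagonal (fun i => if i = 0 then (-1 : ℝ) else 1)

/-- The Minkowski bilinear form `η(x,y) = -x₀y₀ + ∑ᵢ xᵢyᵢ`. -/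
noncomputable def mdot {N : ℕ} (x y : Fin (N+1) → ℝ) : ℝ :=
  x ⬝ᵥ (eta N).mulVec y

/-- Future-directed timelike: `η(v,v) < 0` and `v₀ > 0`. -/
def FDTimelike {N : ℕ} (v : Fin (N+1) → ℝ) : Prop :=
  mdot v v < 0 ∧ 0 < v 0

/-- Future-directed lightlike: `v ≠ 0`, `η(v,v) = 0` and `v₀ > 0`. -/
def FDLightlike {N : ℕ} (v : Fin (N+1) → ℝ) : Prop :=
  v ≠ 0 ∧ mdot v v = 0 ∧ 0 < v 0

/-- Future-directed causal: future-directed timelike or lightlike. -/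
def FDCausal {N : ℕ} (v : Fin (N+1) → ℝ) : Prop :=
  FDTimelike v ∨ FDLightlike v

/-- The bilinear form associated to a matrix: `T(v,w) = vᵀ T w`. -/
noncomputable def Tbil {N : ℕ} (T : Matrix (Fin (N+1)) (Fin (N+1)) ℝ)
    (v w : Fin (N+1) → ℝ) : ℝ :=
  v ⬝ᵥ T.mulVec w

/-- The endomorphism associated to a stress-energy tensor: `u(v) = -ηTv`. -/
noncomputable def endo {N : ℕ} (T : Matrix (Fin (N+1)) (Fin (N+1)) ℝ)
    (v : Fin (N+1) → ℝ) : Fin (N+1) → ℝ :=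
  -((eta N).mulVec (T.mulVec v))

/-- The dominant energy condition: every future-directed causal vector is
sent by the associated endomorphism to a future-directed causal vector or zero. -/
def DEC {N : ℕ} (T : Matrix (Fin (N+1)) (Fin (N+1)) ℝ) : Prop :=
  ∀ v : Fin (N+1) → ℝ, FDCausal v → FDCausal (endo T v) ∨ endo T v = 0

/- ===== auxiliary lemmas ===== -/

lemma mdot_eq {N : ℕ} (x y : Fin (N+1) → ℝ) :
    mdot x y = -(x 0 * y 0) + ∑ i : Fin N, x i.succ * y i.succ := by
  unfold mdot eta
  simp only [dotProduct, mulVec_diagonal]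
  rw [Fin.sum_univ_succ]
  simp [Fin.succ_ne_zero]

lemma mdot_endo {N : ℕ} (T : Matrix (Fin (N+1)) (Fin (N+1)) ℝ)
    (v w : Fin (N+1) → ℝ) :
    mdot (endo T v) w = -(w ⬝ᵥ T.mulVec v) := by
  unfold mdot endo eta
  simp only [dotProduct, mulVec_diagonal, Pi.neg_apply, neg_mul, Finset.sum_neg_distrib,
    neg_inj]
  apply Finset.sum_congr rfl
  intro i _
  by_cases h : i = 0 <;> simp [h] <;> ring

/-- η applied twice is the identity. -/
lemma eta_eta {N : ℕ} (x : Fin (N+1) → ℝ) :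
    (eta N).mulVec ((eta N).mulVec x) = x := by
  funext i
  unfold eta
  simp only [mulVec_diagonal]
  by_cases h : i = 0 <;> simp [h]

lemma endo_zero {N : ℕ} {T : Matrix (Fin (N+1)) (Fin (N+1)) ℝ}
    {v : Fin (N+1) → ℝ} (h : endo T v = 0) : T.mulVec v = 0 := by
  unfold endo at h
  rw [neg_eq_zero] at h
  have := congrArg ((eta N).mulVec) h
  rwa [eta_eta, mulVec_zero] at this

/-- A future timelike vector has negative Minkowski product against a
future lightlike vector. -/
lemma mdot_neg {N : ℕ} {t n : Fin (N+1) → ℝ}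
    (ht : FDTimelike t) (hn : FDLightlike n) : mdot t n < 0 := by
  obtain ⟨htt, ht0⟩ := ht
  obtain ⟨_, hnn, hn0⟩ := hn
  rw [mdot_eq] at htt hnn ⊢
  set S := ∑ i : Fin N, t i.succ * n i.succ with hS
  have ha : ∑ i : Fin N, t i.succ * t i.succ < t 0 * t 0 := by linarith
  have hb : ∑ i : Fin N, n i.succ * n i.succ = n 0 * n 0 := by linarith
  have hcs : S ^ 2 ≤ (∑ i : Fin N, t i.succ ^ 2) * ∑ i : Fin N, n i.succ ^ 2 :=
    Finset.sum_mul_sq_le_sq_mul_sq _ _ _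
  have hta : ∑ i : Fin N, t i.succ ^ 2 = ∑ i : Fin N, t i.succ * t i.succ := by
    apply Finset.sum_congr rfl; intro i _; ring
  have hna : ∑ i : Fin N, n i.succ ^ 2 = ∑ i : Fin N, n i.succ * n i.succ := by
    apply Finset.sum_congr rfl; intro i _; ring
  rw [hta, hna, hb] at hcs
  have hnn0 : 0 ≤ ∑ i : Fin N, n i.succ * n i.succ :=
    Finset.sum_nonneg fun i _ => mul_self_nonneg _
  have htt0 : 0 ≤ ∑ i : Fin N, t i.succ * t i.succ :=
    Finset.sum_nonneg fun i _ => mul_self_nonneg _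
  have hlt : S ^ 2 < (t 0 * n 0) ^ 2 := by nlinarith [mul_pos hn0 hn0]
  nlinarith [mul_pos ht0 hn0]

/-- Under the weakened stable dominant energy condition, if `T ≠ 0` then
`T(n,n) > 0` for every future-directed lightlike vector `n`. -/
theorem wsdec_null_positive {N : ℕ} (hN : 1 ≤ N)
    (T : Matrix (Fin (N+1)) (Fin (N+1)) ℝ) (hsymm : T.IsSymm)
    (hwsdec : ∀ v : Fin (N+1) → ℝ, FDCausal v →
      FDTimelike (endo T v) ∨ endo T v = 0)
    (hT : T ≠ 0) :
    ∀ n : Fin (N+1) → ℝ, FDLightlike n → 0 < Tbil T n n := by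
  intro n hn
  rcases hwsdec n (Or.inr hn) with hu | hu
  · -- endo T n is timelike: then T(n,n) = -mdot(endo T n, n) > 0
    have h1 : mdot (endo T n) n < 0 := mdot_neg hu hn
    rw [mdot_endo] at h1
    unfold Tbil
    linarith
  · -- endo T n = 0: derive T = 0, contradiction
    exfalso
    apply hT
    have hTn : T.mulVec n = 0 := endo_zero hu
    -- every future timelike vector is killed by T
    have hz : ∀ v : Fin (N+1) → ℝ, FDTimelike v → T.mulVec v = 0 := by
      intro v hv
      rcases hwsdec v (Or.inl hv) with huv | huv
      · exfalso
        have h1 : mdot (endo T v) n < 0 := mdot_neg huv hn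
        rw [mdot_endo] at h1
        have h3 : n ⬝ᵥ T.mulVec v = 0 := by
          rw [dotProduct_mulVec, ← mulVec_transpose, hsymm.eq, hTn]
          simp
        linarith
      · exact endo_zero huv
    -- e₀ is future timelike
    set e0 : Fin (N+1) → ℝ := fun k => if k = 0 then 1 else 0 with he0def
    have he0 : FDTimelike e0 := by
      constructor
      · rw [mdot_eq]
        simp [he0def, Fin.succ_ne_zero]
      · simp [he0def]
    have hTe0 : T.mulVec e0 = 0 := hz e0 he0
    -- every vector is killed by T
    have hall : ∀ v : Fin (N+1) → ℝ, T.mulVec v = 0 := by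
      intro v
      set m := mdot v v with hm
      set c : ℝ := 2 * |v 0| + |m| + 1 with hc
      have hcpos : 1 ≤ c := by
        have := abs_nonneg (v 0); have := abs_nonneg m; simp [hc]; linarith
      set w : Fin (N+1) → ℝ := fun k => if k = 0 then v 0 + c else v k with hw
      have hweq : w = v + c • e0 := by
        funext k
        by_cases h : k = 0 <;> simp [hw, he0def, h]
      have hwt : FDTimelike w := by
        constructor
        · have h1 : mdot w w = -((v 0 + c) * (v 0 + c)) + ∑ i : Fin N, v i.succ * v i.succ := by
            rw [mdot_eq]
            simp [hw, Fin.succ_ne_zero]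
          have h2 : m = -(v 0 * v 0) + ∑ i : Fin N, v i.succ * v i.succ := mdot_eq v v
          have hv0 : -(|v 0|) ≤ v 0 := neg_abs_le _
          have hm' : m ≤ |m| := le_abs_self m
          nlinarith [abs_nonneg (v 0), abs_nonneg m]
        · have hv0 : -(|v 0|) ≤ v 0 := neg_abs_le _
          have : w 0 = v 0 + c := by simp [hw]
          rw [this, hc]
          have := abs_nonneg m
          linarith
      have hTw : T.mulVec w = 0 := hz w hwt
      rw [hweq, mulVec_add, mulVec_smul, hTe0] at hTw
      simpa using hTw
    -- conclude T = 0
    ext i j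
    have := congrFun (hall (Pi.single j 1)) i
    rw [mulVec_single] at this
    simpa using this
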